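/- The difference sequence of the Thue–Morse sequence is square-free: there is no nonempty word u and position i such that the factor of w starting at i equals u·u, where w_i = v_{i+1} − v_i and v is the Thue–Morse sequence. -/
import Mathlib

/-- The Thue–Morse sequence: parity of the number of 1s in binary. -/
def thueMorse (n : ℕ) : ℕ := (Nat.digits 2 n).count 1 % 2

/-- The difference sequence of the Thue–Morse sequence. -/
def tmDiff (i : ℕ) : ℤ := (thueMorse (i + 1) : ℤ) - thueMorse i

lemma tm_le_one (n : ℕ) : thueMorse n ≤ 1 :=
  Nat.lt_succ_iff.mp (Nat.mod_lt _ (by norm_num))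

lemma tm_two_mul (n : ℕ) : thueMorse (2 * n) = thueMorse n := by
  rcases Nat.eq_zero_or_pos n with h | h
  · simp [h]
  · unfold thueMorse
    rw [Nat.digits_def' (by norm_num : 1 < 2) (by omega)]
    have h1 : 2 * n % 2 = 0 := by omega
    have h2 : 2 * n / 2 = n := by omega
    rw [h1, h2]
    simp

lemma tm_two_mul_add_one (n : ℕ) : thueMorse (2 * n + 1) = 1 - thueMorse n := by
  unfold thueMorse
  rw [Nat.digits_def' (by norm_num : 1 < 2) (by omega)]
  have h1 : (2 * n + 1) % 2 = 1 := by omega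
  have h2 : (2 * n + 1) / 2 = n := by omega
  rw [h1, h2, List.count_cons_self]
  omega

lemma tm_even_ne (n : ℕ) : thueMorse (2 * n) ≠ thueMorse (2 * n + 1) := by
  rw [tm_two_mul, tm_two_mul_add_one]
  have := tm_le_one n
  omega

lemma tm_no_triple (q : ℕ) (h1 : thueMorse q = thueMorse (q + 1))
    (h2 : thueMorse (q + 1) = thueMorse (q + 2)) : False := by
  rcases Nat.even_or_odd q with ⟨a, ha⟩ | ⟨a, ha⟩
  · rw [show q = 2 * a by omega, show 2 * a + 1 = 2 * a + 1 from rfl] at h1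
    exact tm_even_ne a h1
  · rw [show q + 1 = 2 * (a + 1) by omega, show q + 2 = 2 * (a + 1) + 1 by omega] at h2
    exact tm_even_ne (a + 1) h2

lemma overlapFree : ∀ k, 0 < k → ∀ m, ¬ (∀ j ≤ k, thueMorse (m + j) = thueMorse (m + j + k)) := by
  intro k
  induction k using Nat.strong_induction_on with
  | _ k IH =>
    intro hk m H
    rcases Nat.even_or_odd k with ⟨l, hl⟩ | ⟨h, hh⟩
    · -- k = 2l even
      have hk2 : k = 2 * l := by omega
      have hl0 : 0 < l := by omega
      rcases Nat.even_or_odd m with ⟨a, hm⟩ | ⟨a, hm⟩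
      · -- m = 2a
        apply IH l (by omega) hl0 a
        intro j hj
        have hx := H (2 * j) (by omega)
        rw [show m + 2 * j + k = 2 * (a + j + l) by omega,
            show m + 2 * j = 2 * (a + j) by omega,
            tm_two_mul, tm_two_mul] at hx
        exact hx
      · -- m = 2a+1
        apply IH l (by omega) hl0 a
        intro j hj
        have hx := H (2 * j) (by omega)
        rw [show m + 2 * j + k = 2 * (a + j + l) + 1 by omega,
            show m + 2 * j = 2 * (a + j) + 1 by omega,
            tm_two_mul_add_one, tm_two_mul_add_one] at hx
        have := tm_le_one (a + j)
        have := tm_le_one (a + j + l)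
        omega
    · -- k = 2h+1 odd
      have hk2 : k = 2 * h + 1 := by omega
      have hA : ∀ n p, n + h = p → m ≤ 2 * n → 2 * n ≤ m + k →
          thueMorse n = 1 - thueMorse p := by
        intro n p hp hn1 hn2
        have hx := H (2 * n - m) (by omega)
        rw [show m + (2 * n - m) + k = 2 * (n + h) + 1 by omega,
            show m + (2 * n - m) = 2 * n by omega,
            tm_two_mul, tm_two_mul_add_one] at hx
        rw [← hp]; exact hx
      have hB : ∀ n p, n + h + 1 = p → m ≤ 2 * n + 1 → 2 * n + 1 ≤ m + k →
          1 - thueMorse n = thueMorse p := by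
        intro n p hp hn1 hn2
        have hx := H (2 * n + 1 - m) (by omega)
        rw [show m + (2 * n + 1 - m) + k = 2 * (n + h + 1) by omega,
            show m + (2 * n + 1 - m) = 2 * n + 1 by omega,
            tm_two_mul_add_one, tm_two_mul] at hx
        rw [← hp]; exact hx
      rcases Nat.eq_zero_or_pos h with h0 | h1
      · -- k = 1
        subst h0
        rcases Nat.even_or_odd m with ⟨a, hm⟩ | ⟨a, hm⟩
        · have hx := H 0 (by omega)
          rw [show m + 0 + k = 2 * a + 1 by omega, show m + 0 = 2 * a by omega] at hx
          exact tm_even_ne a hx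
        · have hx := H 1 (by omega)
          rw [show m + 1 + k = 2 * (a + 1) + 1 by omega,
              show m + 1 = 2 * (a + 1) by omega] at hx
          exact tm_even_ne (a + 1) hx
      · rcases Nat.even_or_odd m with ⟨a, hm⟩ | ⟨a, hm⟩
        · -- m = 2a, h ≥ 1
          have eA0 := hA a (a + h) rfl (by omega) (by omega)
          have eB0 := hB a (a + h + 1) rfl (by omega) (by omega)
          have eA1 := hA (a + 1) (a + h + 1) (by omega) (by omega) (by omega)
          have eB1 := hB (a + 1) (a + h + 2) (by omega) (by omega) (by omega)
          have l1 := tm_le_one a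
          have l2 := tm_le_one (a + 1)
          have l3 := tm_le_one (a + h)
          have l4 := tm_le_one (a + h + 1)
          have l5 := tm_le_one (a + h + 2)
          exact tm_no_triple (a + h)
            (by rw [show a + h + 1 = a + h + 1 from rfl]; omega)
            (by rw [show a + h + 2 = a + h + 1 + 1 by omega] at eB1 ⊢; omega)
        · -- m = 2a+1, h ≥ 1
          rcases Nat.lt_or_ge h 2 with h2 | h2
          · -- h = 1, k = 3
            have hh1 : h = 1 := by omega
            subst hh1
            have eA0 := hA (a + 1) (a + 2) (by omega) (by omega) (by omega)
            have eB0 := hB (a + 1) (a + 3) (by omega) (by omega) (by omega)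
            have eA1 := hA (a + 2) (a + 3) (by omega) (by omega) (by omega)
            have l1 := tm_le_one (a + 1)
            have l2 := tm_le_one (a + 2)
            have l3 := tm_le_one (a + 3)
            omega
          · -- h ≥ 2
            have eA0 := hA (a + 1) (a + h + 1) (by omega) (by omega) (by omega)
            have eB0 := hB (a + 1) (a + h + 2) (by omega) (by omega) (by omega)
            have eA1 := hA (a + 2) (a + h + 2) (by omega) (by omega) (by omega)
            have eB1 := hB (a + 2) (a + h + 3) (by omega) (by omega) (by omega)
            have l1 := tm_le_one (a + 1)
            have l2 := tm_le_one (a + 2)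
            have l3 := tm_le_one (a + h + 1)
            have l4 := tm_le_one (a + h + 2)
            have l5 := tm_le_one (a + h + 3)
            exact tm_no_triple (a + h + 1)
              (by rw [show a + h + 1 + 1 = a + h + 2 by omega]; omega)
              (by rw [show a + h + 1 + 1 = a + h + 2 by omega,
                      show a + h + 1 + 2 = a + h + 3 by omega]; omega)

/-- The difference sequence of Thue–Morse is square-free. -/
theorem tmDiff_squarefree :
    ¬ ∃ i k : ℕ, 0 < k ∧ ∀ j < k, tmDiff (i + j) = tmDiff (i + k + j) := by
  rintro ⟨i, k, hk, H⟩
  have hc : ∀ j, j ≤ k →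
      (thueMorse (i + j) : ℤ) - thueMorse (i + k + j)
        = (thueMorse i : ℤ) - thueMorse (i + k) := by
    intro j
    induction j with
    | zero => intro _; norm_num
    | succ j ih =>
      intro hj
      have h1 := ih (by omega)
      have h2 := H j (by omega)
      unfold tmDiff at h2
      have e1 : i + j + 1 = i + (j + 1) := by omega
      have e2 : i + k + j + 1 = i + k + (j + 1) := by omega
      rw [e1, e2] at h2
      omega
  have h0 := hc k le_rfl
  have l1 := tm_le_one i
  have l2 := tm_le_one (i + k)
  have l3 := tm_le_one (i + k + k)
  rcases eq_or_ne (thueMorse i) (thueMorse (i + k)) with he | he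
  · apply overlapFree k hk i
    intro j hj
    rw [show i + j + k = i + k + j by omega]
    have := hc j hj
    omega
  · omega
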